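/- For a real number α > 0, Σ_{m ≥ 0} 1/(m+α)³ = Σ_{0 ≤ m₁ < m₂} ((α)_{m₁}/m₁!) · (m₂!/(α)_{m₂}) · 1/((m₁+α)(m₂+α)²). -/

import Mathlib

open Finset Filter Topology

noncomputable def rpoch (α : ℝ) (m : ℕ) : ℝ := ∏ i ∈ Finset.range m, (α + i)

namespace Stmt16

lemma rpoch_succ (β : ℝ) (n : ℕ) : rpoch β (n+1) = rpoch β n * (β + n) :=
  Finset.prod_range_succ _ n

lemma rpoch_pos {β : ℝ} (hβ : 0 < β) (n : ℕ) : 0 < rpoch β n :=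
  Finset.prod_pos fun i _ => by positivity

lemma rpoch_add (β : ℝ) (m n : ℕ) : rpoch β (m+n) = rpoch β m * rpoch (β + m) n := by
  induction n with
  | zero => simp [rpoch]
  | succ n ih =>
      rw [← Nat.add_assoc, rpoch_succ, ih, rpoch_succ]
      push_cast; ring

lemma rpoch_shift (β : ℝ) (m : ℕ) : rpoch β (m+1) = β * rpoch (β+1) m := by
  induction m with
  | zero => simp [rpoch_succ, rpoch]
  | succ m ih => rw [rpoch_succ, ih, rpoch_succ]; push_cast; ring

/-- the connector, normalized so that `cc α 0 0 = 1`. -/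
noncomputable def cc (α : ℝ) (m n : ℕ) : ℝ :=
  rpoch (α+1) m * rpoch (α+1) n / rpoch (2*α+1) (m+n)

noncomputable def w (α : ℝ) (k : ℕ) : ℝ := rpoch α k / (Nat.factorial k * ((k:ℝ) + α))
noncomputable def vv (α : ℝ) (k : ℕ) : ℝ := rpoch α k / (Nat.factorial k)

section basic
variable {α : ℝ}

lemma cc_pos (hα : 0 < α) (m n : ℕ) : 0 < cc α m n := by
  have h1 : (0:ℝ) < α + 1 := by linarith
  have h2 : (0:ℝ) < 2*α + 1 := by linarith
  exact div_pos (mul_pos (rpoch_pos h1 m) (rpoch_pos h1 n)) (rpoch_pos h2 _)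

lemma cc_nonneg (hα : 0 < α) (m n : ℕ) : 0 ≤ cc α m n := (cc_pos hα m n).le

lemma w_pos (hα : 0 < α) (k : ℕ) : 0 < w α k := by
  have h1 : (0:ℝ) < (Nat.factorial k : ℝ) := by positivity
  have h2 : (0:ℝ) < (k:ℝ) + α := by positivity
  exact div_pos (rpoch_pos hα k) (by positivity)

lemma w_nonneg (hα : 0 < α) (k : ℕ) : 0 ≤ w α k := (w_pos hα k).le

lemma vv_pos (hα : 0 < α) (k : ℕ) : 0 < vv α k := by
  have h1 : (0:ℝ) < (Nat.factorial k : ℝ) := by positivity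
  exact div_pos (rpoch_pos hα k) h1

lemma vv_eq_w_mul (hα : 0 < α) (k : ℕ) : vv α k = w α k * ((k:ℝ) + α) := by
  have hk : (0:ℝ) < ((k:ℝ) + α) := by positivity
  have hf : ((Nat.factorial k : ℝ)) ≠ 0 := by positivity
  rw [vv, w, div_mul_eq_mul_div, div_eq_div_iff hf (by positivity)]
  ring

lemma cc_symm (m n : ℕ) : cc α m n = cc α n m := by
  rw [cc, cc, Nat.add_comm m n, mul_comm]

lemma cc_zero_zero : cc α 0 0 = 1 := by simp [cc, rpoch]

lemma cc_succ_right (hα : 0 < α) (m n : ℕ) :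
    cc α m (n+1) * (2*α+1+((m:ℝ)+n)) = cc α m n * (α+1+(n:ℝ)) := by
  have h1 : (0:ℝ) < α + 1 := by linarith
  have h2 : (0:ℝ) < 2*α + 1 := by linarith
  have e1 : m + (n+1) = (m+n) + 1 := rfl
  rw [cc, cc, e1, rpoch_succ, rpoch_succ]
  have hmn : rpoch (2*α+1) (m+n) ≠ 0 := (rpoch_pos h2 _).ne'
  have hc : ((m+n : ℕ) : ℝ) = (m:ℝ) + n := by push_cast; ring
  have hden : rpoch (2*α+1) (m+n) * (2*α+1+((m+n:ℕ):ℝ)) ≠ 0 := by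
    rw [hc]; positivity
  field_simp
  push_cast; ring

/-- telescoping identity, right variable. -/
lemma T1 (hα : 0 < α) (m n : ℕ) :
    (cc α m n - cc α m (n+1)) * ((n:ℝ)+1+α) = cc α m (n+1) * ((m:ℝ)+α) := by
  have h := cc_succ_right (α := α) hα m n
  linear_combination -h

/-- telescoping identity, left variable. -/
lemma T1' (hα : 0 < α) (m n : ℕ) :
    (cc α m n - cc α (m+1) n) * ((m:ℝ)+1+α) = cc α (m+1) n * ((n:ℝ)+α) := by
  have h := T1 (α := α) hα n m
  rw [cc_symm n m, cc_symm n (m+1)] at h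
  exact h

lemma cc_antitone (hα : 0 < α) (m : ℕ) : Antitone (cc α m) := by
  refine antitone_nat_of_succ_le (fun n => ?_)
  have h := T1 hα m n
  have h1 : (0:ℝ) < (n:ℝ)+1+α := by positivity
  have h2 : (0:ℝ) ≤ cc α m (n+1) * ((m:ℝ)+α) :=
    mul_nonneg (cc_nonneg hα _ _) (by positivity)
  nlinarith [cc_pos hα m (n+1)]

lemma not_summable_shift (hα : 0 < α) : ¬ Summable (fun n : ℕ => 1/((n:ℝ)+1+α)) := by
  intro h
  have h2 : Summable (fun n : ℕ => 1/((n:ℝ)+1)) := by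
    refine Summable.of_nonneg_of_le (fun n => by positivity) (fun n => ?_)
      (h.mul_left (1+α))
    have hn : (0:ℝ) < (n:ℝ)+1 := by positivity
    have hn2 : (0:ℝ) < (n:ℝ)+1+α := by positivity
    rw [div_le_iff₀ hn, mul_one_div, div_mul_eq_mul_div, le_div_iff₀ hn2]
    nlinarith
  have h3 : Summable (fun n : ℕ => 1/(n:ℝ)) := by
    rw [← summable_nat_add_iff 1]
    refine h2.congr (fun n => ?_)
    push_cast; ring
  exact Real.not_summable_one_div_natCast h3

lemma cc_tendsto_zero (hα : 0 < α) (m : ℕ) :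
    Tendsto (fun n => cc α m n) atTop (𝓝 0) := by
  set d : ℕ → ℝ := fun n => cc α m n - cc α m (n+1) with hd
  have hdnn : ∀ n, 0 ≤ d n := fun n =>
    sub_nonneg.2 (cc_antitone hα m (Nat.le_succ n))
  have hsum : ∀ N, ∑ i ∈ range N, d i = cc α m 0 - cc α m N := fun N =>
    Finset.sum_range_sub' (fun n => cc α m n) N
  have hSd : Summable d := by
    refine summable_of_sum_range_le (c := cc α m 0) hdnn (fun N => ?_)
    rw [hsum]
    have := cc_nonneg hα m N
    linarith
  have htend : Tendsto (fun N => cc α m N) atTop (𝓝 (cc α m 0 - ∑' n, d n)) := by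
    have h1 : Tendsto (fun N => ∑ i ∈ range N, d i) atTop (𝓝 (∑' n, d n)) :=
      hSd.hasSum.tendsto_sum_nat
    have h2 : Tendsto (fun N => cc α m 0 - ∑ i ∈ range N, d i) atTop
        (𝓝 (cc α m 0 - ∑' n, d n)) := tendsto_const_nhds.sub h1
    refine h2.congr (fun N => ?_)
    rw [hsum]; ring
  set L := cc α m 0 - ∑' n, d n with hL
  have hL0 : 0 ≤ L := ge_of_tendsto' htend (fun n => cc_nonneg hα m n)
  have hLe : ∀ n, L ≤ cc α m n := fun n => (cc_antitone hα m).le_of_tendsto htend n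
  have hLzero : L = 0 := by
    by_contra hne
    have hLpos : 0 < L := lt_of_le_of_ne hL0 (Ne.symm hne)
    have hcomp : ∀ n : ℕ, L * ((m:ℝ)+α) * (1/((n:ℝ)+1+α)) ≤ d n := by
      intro n
      have h := T1 hα m n
      have hn1 : (0:ℝ) < (n:ℝ)+1+α := by positivity
      have hcc : L * ((m:ℝ)+α) ≤ cc α m (n+1) * ((m:ℝ)+α) := by
        have : (0:ℝ) ≤ (m:ℝ)+α := by positivity
        exact mul_le_mul_of_nonneg_right (hLe (n+1)) this
      rw [mul_one_div, div_le_iff₀ hn1]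
      calc L * ((m:ℝ)+α) ≤ cc α m (n+1) * ((m:ℝ)+α) := hcc
        _ = d n * ((n:ℝ)+1+α) := h.symm
    have hS2 : Summable (fun n : ℕ => L * ((m:ℝ)+α) * (1/((n:ℝ)+1+α))) :=
      Summable.of_nonneg_of_le
        (fun n => by positivity) hcomp hSd
    have hS3 : Summable (fun n : ℕ => 1/((n:ℝ)+1+α)) := by
      have hne2 : L * ((m:ℝ)+α) ≠ 0 := by positivity
      have := hS2.mul_left (1/(L * ((m:ℝ)+α)))
      refine this.congr (fun n => ?_)
      field_simp
    exact not_summable_shift hα hS3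
  rw [hLzero] at htend
  exact htend


/-- key telescoping sum: `∑_{j} cc m (n+1+j)/(n+1+j+α) = cc m n/(m+α)`. -/
lemma hasSumA (hα : 0 < α) (m n : ℕ) :
    HasSum (fun j : ℕ => cc α m (n+1+j) / (((n+1+j : ℕ) : ℝ) + α))
      (cc α m n / ((m:ℝ)+α)) := by
  have hmα : (0:ℝ) < (m:ℝ)+α := by positivity
  have hterm : ∀ j : ℕ, cc α m (n+1+j) / (((n+1+j : ℕ) : ℝ) + α)
      = (cc α m (n+j) - cc α m (n+j+1)) * (1/((m:ℝ)+α)) := by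
    intro j
    have h := T1 hα m (n+j)
    have h1 : (0:ℝ) < ((n+j:ℕ):ℝ)+1+α := by positivity
    have he : n+1+j = (n+j)+1 := by omega
    have hc : (((n+j+1 : ℕ)):ℝ) + α = ((n+j:ℕ):ℝ)+1+α := by push_cast; ring
    rw [he, hc, div_eq_iff h1.ne', mul_one_div, div_mul_eq_mul_div, eq_comm,
      div_eq_iff hmα.ne']
    linear_combination h
  rw [hasSum_iff_tendsto_nat_of_nonneg (fun j => div_nonneg (cc_nonneg hα _ _) (by positivity))]
  have hps : ∀ N : ℕ, ∑ j ∈ range N, cc α m (n+1+j) / (((n+1+j : ℕ) : ℝ) + α)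
      = (cc α m n - cc α m (n+N)) * (1/((m:ℝ)+α)) := by
    intro N
    calc ∑ j ∈ range N, cc α m (n+1+j) / (((n+1+j : ℕ) : ℝ) + α)
        = ∑ j ∈ range N, (cc α m (n+j) - cc α m (n+j+1)) * (1/((m:ℝ)+α)) := by
          exact Finset.sum_congr rfl (fun j _ => hterm j)
      _ = (cc α m (n+0) - cc α m (n+N)) * (1/((m:ℝ)+α)) := by
          rw [← Finset.sum_mul]
          congr 1
          simpa [Nat.add_assoc] using Finset.sum_range_sub' (fun i => cc α m (n+i)) N
      _ = (cc α m n - cc α m (n+N)) * (1/((m:ℝ)+α)) := by norm_num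
  have haux : Tendsto (fun N : ℕ => n + N) atTop atTop :=
    (tendsto_add_atTop_nat n).congr (fun a => Nat.add_comm a n)
  have htail : Tendsto (fun N : ℕ => cc α m (n+N)) atTop (𝓝 0) :=
    (cc_tendsto_zero hα m).comp haux
  have : Tendsto (fun N : ℕ => (cc α m n - cc α m (n+N)) * (1/((m:ℝ)+α))) atTop
      (𝓝 ((cc α m n - 0) * (1/((m:ℝ)+α)))) :=
    (tendsto_const_nhds.sub htail).mul_const _
  simp only [sub_zero, mul_one_div] at this
  refine Tendsto.congr (fun N => (hps N).symm) ?_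
  simpa [div_eq_mul_inv] using this

lemma cc_le (hα : 0 < α) (m k : ℕ) : cc α m k ≤ cc α m 0 * cc α 0 k := by
  have h1 : (0:ℝ) < α + 1 := by linarith
  have h2 : (0:ℝ) < 2*α + 1 := by linarith
  have hnum : (0:ℝ) ≤ rpoch (α+1) m * rpoch (α+1) k :=
    (mul_pos (rpoch_pos h1 m) (rpoch_pos h1 k)).le
  have hle : rpoch (2*α+1) m * rpoch (2*α+1) k ≤ rpoch (2*α+1) (m+k) := by
    rw [rpoch_add]
    refine mul_le_mul_of_nonneg_left ?_ (rpoch_pos h2 m).le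
    refine Finset.prod_le_prod (fun i _ => by positivity) (fun i _ => by
      have : (0:ℝ) ≤ (m:ℝ) := Nat.cast_nonneg m
      linarith)
  have hd1 : (0:ℝ) < rpoch (2*α+1) m * rpoch (2*α+1) k :=
    mul_pos (rpoch_pos h2 m) (rpoch_pos h2 k)
  have h3 : cc α m k ≤ (rpoch (α+1) m * rpoch (α+1) k) /
      (rpoch (2*α+1) m * rpoch (2*α+1) k) := by
    rw [cc]
    exact div_le_div_of_nonneg_left hnum hd1 hle
  refine h3.trans_eq ?_
  rw [cc, cc]
  rw [show m + 0 = m from rfl, Nat.zero_add k]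
  rw [show rpoch (α+1) 0 = 1 from Finset.prod_range_zero _]
  rw [div_mul_div_comm]
  ring_nf


lemma hasSum_t (hα : 0 < α) :
    HasSum (fun k : ℕ => 1/(((k:ℝ)+α)*((k:ℝ)+α+1))) (1/α) := by
  have hterm : ∀ k : ℕ, 1/(((k:ℝ)+α)*((k:ℝ)+α+1))
      = (fun i : ℕ => 1/((i:ℝ)+α)) k - (fun i : ℕ => 1/((i:ℝ)+α)) (k+1) := by
    intro k
    have h1 : (0:ℝ) < (k:ℝ)+α := by positivity
    have h2 : (0:ℝ) < (k:ℝ)+1+α := by positivity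
    push_cast
    rw [div_sub_div _ _ h1.ne' h2.ne', one_mul, mul_one]
    rw [div_eq_div_iff (by positivity) (by positivity)]
    ring
  rw [hasSum_iff_tendsto_nat_of_nonneg (fun k => by positivity)]
  have hps : ∀ N : ℕ, ∑ k ∈ range N, 1/(((k:ℝ)+α)*((k:ℝ)+α+1))
      = 1/α - 1/((N:ℝ)+α) := by
    intro N
    rw [Finset.sum_congr rfl (fun k _ => hterm k),
      Finset.sum_range_sub' (fun i : ℕ => 1/((i:ℝ)+α)) N]
    norm_num
  have htail : Tendsto (fun N : ℕ => 1/((N:ℝ)+α)) atTop (𝓝 0) := by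
    simp only [one_div]
    refine Tendsto.inv_tendsto_atTop ?_
    exact tendsto_atTop_add_const_right atTop α tendsto_natCast_atTop_atTop
  have : Tendsto (fun N : ℕ => 1/α - 1/((N:ℝ)+α)) atTop (𝓝 (1/α - 0)) :=
    tendsto_const_nhds.sub htail
  rw [sub_zero] at this
  exact Tendsto.congr (fun N => (hps N).symm) this

noncomputable def Q (α : ℝ) (k : ℕ) : ℝ :=
  w α k * cc α 0 k * (((k:ℝ)+α)*((k:ℝ)+α+1))

lemma Q_zero (hα : 0 < α) : Q α 0 = α + 1 := by
  rw [Q, w, cc_zero_zero]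
  rw [show rpoch α 0 = 1 from Finset.prod_range_zero _]
  simp only [Nat.factorial_zero, Nat.cast_one, Nat.cast_zero, one_mul, zero_add, mul_one]
  field_simp

lemma Q_pos (hα : 0 < α) (k : ℕ) : 0 < Q α k := by
  have h1 := w_pos hα k
  have h2 := cc_pos hα 0 k
  have h3 : (0:ℝ) < ((k:ℝ)+α)*((k:ℝ)+α+1) := by positivity
  rw [Q]
  exact mul_pos (mul_pos h1 h2) h3

lemma Q_rec (hα : 0 < α) (k : ℕ) :
    Q α (k+1) * ((1+(k:ℝ))*(2*α+1+(k:ℝ))*((k:ℝ)+α+1)) =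
    Q α k * ((α+(k:ℝ))*(α+1+(k:ℝ))*((k:ℝ)+α+2)) := by
  have h1 : (0:ℝ) < α + 1 := by linarith
  have h2 : (0:ℝ) < 2*α + 1 := by linarith
  have e0 : (0:ℕ) + k = k := Nat.zero_add k
  have e1 : (0:ℕ) + (k+1) = k+1 := Nat.zero_add _
  rw [Q, Q, w, w, cc, cc, e0, e1, rpoch_succ, rpoch_succ, rpoch_succ,
    Nat.factorial_succ]
  have hf : ((Nat.factorial k : ℝ)) ≠ 0 := by positivity
  have hkα : ((k:ℝ)+α) ≠ 0 := by positivity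
  have hkα1 : (((k+1:ℕ):ℝ)+α) ≠ 0 := by push_cast; positivity
  have hr2 : rpoch (2*α+1) k ≠ 0 := (rpoch_pos h2 k).ne'
  have hz : rpoch (α+1) 0 = 1 := Finset.prod_range_zero _
  rw [hz]
  push_cast
  field_simp
  ring

lemma Q_bound (hα : 0 < α) (k : ℕ) :
    Q α k ≤ (α+1) * Real.exp ((max (α^2-1) 0) * (2 - 2/((k:ℝ)+1))) := by
  set c : ℝ := max (α^2-1) 0 with hc
  have hc0 : 0 ≤ c := le_max_right _ _
  induction k with
  | zero =>
      rw [Q_zero hα]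
      norm_num
  | succ k ih =>
      have h1 : (0:ℝ) < 1+(k:ℝ) := by positivity
      have h2 : (0:ℝ) < 2*α+1+(k:ℝ) := by positivity
      have h3 : (0:ℝ) < (k:ℝ)+α+1 := by positivity
      have hD : (0:ℝ) < (1+(k:ℝ))*(2*α+1+(k:ℝ))*((k:ℝ)+α+1) := by positivity
      have hQ : Q α (k+1) = Q α k *
          (((α+(k:ℝ))*(α+1+(k:ℝ))*((k:ℝ)+α+2)) /
           ((1+(k:ℝ))*(2*α+1+(k:ℝ))*((k:ℝ)+α+1))) := by
        rw [← mul_div_assoc, eq_div_iff hD.ne']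
        linear_combination Q_rec hα k
      -- ratio bound : ratio ≤ exp (c * (2/((k+1)(k+2))))
      have hx : ((α+(k:ℝ))*(α+1+(k:ℝ))*((k:ℝ)+α+2)) /
           ((1+(k:ℝ))*(2*α+1+(k:ℝ))*((k:ℝ)+α+1)) ≤
           Real.exp (c * (2/(((k:ℝ)+1)*((k:ℝ)+2)))) := by
        have hratio : ((α+(k:ℝ))*(α+1+(k:ℝ))*((k:ℝ)+α+2)) /
           ((1+(k:ℝ))*(2*α+1+(k:ℝ))*((k:ℝ)+α+1)) =
           1 + (α^2-1)/((1+(k:ℝ))*(2*α+1+(k:ℝ))) := by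
          have d1 : ((1+(k:ℝ))*(2*α+1+(k:ℝ))*((k:ℝ)+α+1)) ≠ 0 := hD.ne'
          have d2 : ((1+(k:ℝ))*(2*α+1+(k:ℝ))) ≠ 0 := by positivity
          field_simp
          ring
        rw [hratio]
        have hxle : (α^2-1)/((1+(k:ℝ))*(2*α+1+(k:ℝ))) ≤ c * (2/(((k:ℝ)+1)*((k:ℝ)+2))) := by
          rcases le_or_gt (α^2-1) 0 with h|h
          · have hnp : (α^2-1)/((1+(k:ℝ))*(2*α+1+(k:ℝ))) ≤ 0 :=
              div_nonpos_iff.2 (Or.inr ⟨h, by positivity⟩)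
            have h2' : 0 ≤ c * (2/(((k:ℝ)+1)*((k:ℝ)+2))) := by positivity
            linarith
          · have hceq : c = α^2-1 := max_eq_left (by linarith)
            have hrhs : c * (2/(((k:ℝ)+1)*((k:ℝ)+2)))
                = ((α^2-1)*2)/(((k:ℝ)+1)*((k:ℝ)+2)) := by
              rw [hceq]; ring
            rw [hrhs, div_le_div_iff₀ (by positivity) (by positivity)]
            have key : ((k:ℝ)+1)*((k:ℝ)+2) ≤ 2*((1+(k:ℝ))*(2*α+1+(k:ℝ))) := by
              nlinarith [Nat.cast_nonneg (α := ℝ) k]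
            nlinarith [mul_le_mul_of_nonneg_left key h.le]
        calc 1 + (α^2-1)/((1+(k:ℝ))*(2*α+1+(k:ℝ)))
            ≤ 1 + c * (2/(((k:ℝ)+1)*((k:ℝ)+2))) := by linarith
          _ ≤ Real.exp (c * (2/(((k:ℝ)+1)*((k:ℝ)+2)))) := by
              have := Real.add_one_le_exp (c * (2/(((k:ℝ)+1)*((k:ℝ)+2))))
              linarith
      have hexp : Real.exp (c * (2 - 2/((k:ℝ)+1))) *
          Real.exp (c * (2/(((k:ℝ)+1)*((k:ℝ)+2)))) =
          Real.exp (c * (2 - 2/(((k+1:ℕ):ℝ)+1))) := by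
        rw [← Real.exp_add]
        congr 1
        push_cast
        rw [← mul_add]
        congr 1
        have hk1 : ((k:ℝ)+1) ≠ 0 := by positivity
        have hk2 : ((k:ℝ)+2) ≠ 0 := by positivity
        field_simp
        ring
      have hQk_pos := Q_pos hα k
      have hx0 : (0:ℝ) ≤ ((α+(k:ℝ))*(α+1+(k:ℝ))*((k:ℝ)+α+2)) /
           ((1+(k:ℝ))*(2*α+1+(k:ℝ))*((k:ℝ)+α+1)) := by positivity
      calc Q α (k+1) = Q α k * _ := hQ
        _ ≤ ((α+1) * Real.exp (c * (2 - 2/((k:ℝ)+1)))) *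
            Real.exp (c * (2/(((k:ℝ)+1)*((k:ℝ)+2)))) := by
            refine mul_le_mul ih hx hx0 (by positivity)
        _ = (α+1) * Real.exp (c * (2 - 2/(((k+1:ℕ):ℝ)+1))) := by
            rw [mul_assoc, hexp]

lemma summable_wcc_zero (hα : 0 < α) : Summable (fun k : ℕ => w α k * cc α 0 k) := by
  have hEmax : ∀ k : ℕ, Q α k ≤ (α+1) * Real.exp ((max (α^2-1) 0) * 2) := by
    intro k
    have hc0 : (0:ℝ) ≤ max (α^2-1) 0 := le_max_right _ _
    have h1 : (0:ℝ) < (k:ℝ)+1 := by positivity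
    have : (max (α^2-1) 0) * (2 - 2/((k:ℝ)+1)) ≤ (max (α^2-1) 0) * 2 := by
      refine mul_le_mul_of_nonneg_left ?_ hc0
      have : (0:ℝ) ≤ 2/((k:ℝ)+1) := by positivity
      linarith
    calc Q α k ≤ (α+1) * Real.exp ((max (α^2-1) 0) * (2 - 2/((k:ℝ)+1))) := Q_bound hα k
      _ ≤ (α+1) * Real.exp ((max (α^2-1) 0) * 2) := by
          refine mul_le_mul_of_nonneg_left (Real.exp_le_exp.2 this) (by positivity)
  set C : ℝ := (α+1) * Real.exp ((max (α^2-1) 0) * 2) with hC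
  refine Summable.of_nonneg_of_le
    (fun k => mul_nonneg (w_nonneg hα k) (cc_nonneg hα 0 k))
    (fun k => ?_) (((hasSum_t hα).summable).mul_left C)
  have hk : (0:ℝ) < ((k:ℝ)+α)*((k:ℝ)+α+1) := by positivity
  have hQ : w α k * cc α 0 k = Q α k * (1/(((k:ℝ)+α)*((k:ℝ)+α+1))) := by
    rw [Q]; field_simp
  rw [hQ]
  exact mul_le_mul_of_nonneg_right (hEmax k) (by positivity)

lemma summable_wcc (hα : 0 < α) (m : ℕ) : Summable (fun k : ℕ => w α k * cc α m k) := by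
  refine Summable.of_nonneg_of_le
    (fun k => mul_nonneg (w_nonneg hα k) (cc_nonneg hα m k))
    (fun k => ?_) ((summable_wcc_zero hα).mul_left (cc α m 0))
  have := cc_le hα m k
  have hw := w_nonneg hα k
  calc w α k * cc α m k ≤ w α k * (cc α m 0 * cc α 0 k) :=
        mul_le_mul_of_nonneg_left this hw
    _ = cc α m 0 * (w α k * cc α 0 k) := by ring

lemma sum_vv (hα : 0 < α) (n : ℕ) :
    ∑ k ∈ range n, vv α k = (n:ℝ) * rpoch α n / (α * Nat.factorial n) := by
  induction n with
  | zero => simp [rpoch]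
  | succ n ih =>
      rw [Finset.sum_range_succ, ih, vv, rpoch_succ, Nat.factorial_succ]
      have hf : ((Nat.factorial n : ℝ)) ≠ 0 := by positivity
      push_cast
      field_simp
      ring


noncomputable def Gf (α : ℝ) (m : ℕ) : ℝ := ∑' k, w α k * cc α m k

lemma B1_term (hα : 0 < α) (m k : ℕ) : vv α k * cc α (m+1) k
    = ((m:ℝ)+1+α) * (w α k * cc α m k - w α k * cc α (m+1) k) := by
  have h := T1' hα m k
  rw [vv_eq_w_mul hα]
  linear_combination (-(w α k)) * h

lemma summable_vvcc (hα : 0 < α) (m : ℕ) :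
    Summable (fun k => vv α k * cc α (m+1) k) := by
  have he : (fun k => vv α k * cc α (m+1) k)
      = fun k => ((m:ℝ)+1+α) * (w α k * cc α m k - w α k * cc α (m+1) k) :=
    funext (B1_term hα m)
  rw [he]
  exact (((summable_wcc hα m).sub (summable_wcc hα (m+1))).mul_left _)

lemma B1 (hα : 0 < α) (m : ℕ) :
    ∑' k, vv α k * cc α (m+1) k = ((m:ℝ)+1+α) * (Gf α m - Gf α (m+1)) := by
  calc ∑' k, vv α k * cc α (m+1) k
      = ∑' k, ((m:ℝ)+1+α) * (w α k * cc α m k - w α k * cc α (m+1) k) :=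
        tsum_congr (B1_term hα m)
    _ = ((m:ℝ)+1+α) * ∑' k, (w α k * cc α m k - w α k * cc α (m+1) k) :=
        tsum_mul_left
    _ = ((m:ℝ)+1+α) * (Gf α m - Gf α (m+1)) := by
        rw [Summable.tsum_sub (summable_wcc hα m) (summable_wcc hα (m+1))]; rfl

lemma B2 (hα : 0 < α) (m : ℕ) :
    ((m:ℝ)+1) * (∑' k, vv α k * cc α (m+1) k)
      = α * (((m:ℝ)+1+α) * Gf α (m+1)) := by
  set M : ℕ := m + 1 with hM
  have hMr : ((M:ℕ):ℝ) = (m:ℝ)+1 := by rw [hM]; push_cast; ring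
  have hMα : (0:ℝ) < (m:ℝ)+1+α := by positivity
  set Ψ : ℕ × ℕ → ℝ := fun p =>
    vv α p.1 * (((m:ℝ)+1+α) * (cc α M (p.1+1+p.2) / (((p.1+1+p.2 : ℕ):ℝ)+α))) with hΨdef
  have hslice : ∀ k : ℕ, HasSum (fun j => Ψ (k, j)) (vv α k * cc α M k) := by
    intro k
    have h := (hasSumA hα M k).mul_left (vv α k * (((m:ℝ)+1+α)))
    have hval : vv α k * ((m:ℝ)+1+α) * (cc α M k / (((M:ℕ):ℝ)+α))
        = vv α k * cc α M k := by
      rw [hMr]; field_simp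
    rw [hval] at h
    simpa only [hΨdef, mul_assoc] using h
  have hΨnn : 0 ≤ Ψ := by
    intro p
    have h1 := vv_pos hα p.1
    have h2 := cc_nonneg hα M (p.1+1+p.2)
    have h3 : (0:ℝ) < ((p.1+1+p.2 : ℕ):ℝ)+α := by positivity
    have : 0 ≤ cc α M (p.1+1+p.2) / (((p.1+1+p.2 : ℕ):ℝ)+α) := by positivity
    simp only [hΨdef]
    positivity
  have hΨ : Summable Ψ := by
    refine (summable_prod_of_nonneg hΨnn).2 ⟨fun k => (hslice k).summable, ?_⟩
    refine (summable_vvcc hα m).congr (fun k => ?_)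
    exact ((hslice k).tsum_eq).symm
  have hXeq1 : ∑' k, vv α k * cc α M k = ∑' p, Ψ p := by
    rw [Summable.tsum_prod' hΨ (fun k => (hslice k).summable)]
    exact tsum_congr (fun k => ((hslice k).tsum_eq).symm)
  -- reindex p = (k,j) ↦ q = (k, k+1+j)
  set F : ℕ × ℕ → ℝ := fun q =>
    if q.1 < q.2 then vv α q.1 * (((m:ℝ)+1+α) * (cc α M q.2 / ((q.2:ℝ)+α))) else 0
    with hFdef
  set e : ℕ × ℕ → ℕ × ℕ := fun p => (p.1, p.1+1+p.2) with hedef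
  have he : Function.Injective e := by
    intro a b hab
    simp only [hedef, Prod.mk.injEq] at hab
    obtain ⟨h1, h2⟩ := hab
    exact Prod.ext h1 (by omega)
  have hcomp : ∀ p : ℕ × ℕ, F (e p) = Ψ p := by
    intro p
    simp only [hedef, hFdef, hΨdef]
    rw [if_pos (by omega)]
  have hsupp : Function.support F ⊆ Set.range e := by
    intro q hq
    rcases lt_or_ge q.1 q.2 with h|h
    · exact ⟨(q.1, q.2 - q.1 - 1), by simp only [hedef]; exact Prod.ext rfl (by omega)⟩
    · exfalso; apply hq; simp only [hFdef]; rw [if_neg (by omega)]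
  have hFsum : Summable F := by
    rw [← Function.Injective.summable_iff he (fun x hx => Function.notMem_support.1
      (fun hs => hx (hsupp hs)))]
    exact hΨ.congr (fun p => (hcomp p).symm)
  have hFeq : ∑' p, Ψ p = ∑' q, F q := by
    rw [← Function.Injective.tsum_eq he (f := F) hsupp]
    exact tsum_congr (fun p => (hcomp p).symm)
  -- swap coordinates and sum: columns are finite
  have hFswap : Summable (fun q : ℕ × ℕ => F q.swap) := hFsum.prod_symm
  have hswap_eq : ∑' q, F q = ∑' (n : ℕ) (k : ℕ), F (k, n) := by
    rw [← (Equiv.prodComm ℕ ℕ).tsum_eq F]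
    have : ∀ x : ℕ × ℕ, F ((Equiv.prodComm ℕ ℕ) x) = F x.swap := fun x => rfl
    rw [tsum_congr this, Summable.tsum_prod' hFswap (fun n => ?_)]
    · rfl
    · refine summable_of_ne_finset_zero (s := Finset.range n) (fun k hk => ?_)
      have : ¬ k < n := by simpa using hk
      simp only [hFdef, Prod.swap]
      rw [if_neg this]
  have hcol : ∀ n : ℕ, ∑' k, F (k, n)
      = (((m:ℝ)+1+α)/α) * ((n:ℝ) * (w α n * cc α M n)) := by
    intro n
    have h1 : ∑' k, F (k, n) = ∑ k ∈ Finset.range n, F (k, n) := by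
      refine tsum_eq_sum (fun k hk => ?_)
      have : ¬ k < n := by simpa using hk
      simp only [hFdef]; rw [if_neg this]
    rw [h1]
    have h2 : ∀ k ∈ Finset.range n, F (k, n)
        = vv α k * (((m:ℝ)+1+α) * (cc α M n / ((n:ℝ)+α))) := by
      intro k hk
      simp only [hFdef]
      rw [if_pos (Finset.mem_range.1 hk)]
    rw [Finset.sum_congr rfl h2, ← Finset.sum_mul, sum_vv hα n]
    have hnα : ((n:ℝ)+α) ≠ 0 := by positivity
    have hfn : ((Nat.factorial n : ℝ)) ≠ 0 := by positivity
    rw [w]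
    field_simp
  -- pointwise : n * w n * cc = vv n * cc - α * (w n * cc)
  have hpt : ∀ n : ℕ, (((m:ℝ)+1+α)/α) * ((n:ℝ) * (w α n * cc α M n))
      = (((m:ℝ)+1+α)/α) * (vv α n * cc α M n - α * (w α n * cc α M n)) := by
    intro n
    have := vv_eq_w_mul (α := α) hα n
    rw [this]; ring
  have hXfin : ∑' k, vv α k * cc α M k
      = (((m:ℝ)+1+α)/α) * ((∑' k, vv α k * cc α M k) - α * Gf α M) := by
    calc ∑' k, vv α k * cc α M k = ∑' q, F q := by rw [hXeq1, hFeq]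
      _ = ∑' (n : ℕ) (k : ℕ), F (k, n) := hswap_eq
      _ = ∑' n, (((m:ℝ)+1+α)/α) * (vv α n * cc α M n - α * (w α n * cc α M n)) := by
          refine tsum_congr (fun n => ?_)
          rw [hcol n, hpt n]
      _ = (((m:ℝ)+1+α)/α) * ∑' n, (vv α n * cc α M n - α * (w α n * cc α M n)) :=
          tsum_mul_left
      _ = (((m:ℝ)+1+α)/α) * ((∑' k, vv α k * cc α M k) - α * Gf α M) := by
          rw [Summable.tsum_sub (summable_vvcc hα m) ((summable_wcc hα M).mul_left α),
            tsum_mul_left]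
          rfl
  -- solve the linear equation
  set X : ℝ := ∑' k, vv α k * cc α M k with hX
  have hαne : α ≠ 0 := hα.ne'
  have h4 : α * X = ((m:ℝ)+1+α) * (X - α * Gf α M) := by
    calc α * X = α * ((((m:ℝ)+1+α)/α) * (X - α * Gf α M)) := by rw [← hXfin]
      _ = ((m:ℝ)+1+α) * (X - α * Gf α M) := by field_simp
  linear_combination -h4

lemma key_rec (hα : 0 < α) (m : ℕ) :
    ((m:ℝ)+1+α) * Gf α (m+1) = ((m:ℝ)+1) * Gf α m := by
  have h1 := B1 hα m
  have h2 := B2 hα m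
  rw [h1] at h2
  have hpos : (0:ℝ) < (m:ℝ)+1+α := by positivity
  have hfac : ((m:ℝ)+1+α) * (((m:ℝ)+1) * Gf α m - ((m:ℝ)+1+α) * Gf α (m+1)) = 0 := by
    linear_combination h2
  rcases mul_eq_zero.1 hfac with h|h
  · exact absurd h hpos.ne'
  · linarith [sub_eq_zero.1 h]

lemma G_closed (hα : 0 < α) (m : ℕ) :
    Gf α m * rpoch (α+1) m = Gf α 0 * (Nat.factorial m : ℝ) := by
  induction m with
  | zero =>
      rw [show rpoch (α+1) 0 = 1 from Finset.prod_range_zero _]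
      simp
  | succ m ih =>
      have hpos : (0:ℝ) < (m:ℝ)+1+α := by positivity
      have hsucc : Gf α (m+1) = ((m:ℝ)+1) * Gf α m / ((m:ℝ)+1+α) := by
        rw [eq_div_iff hpos.ne']
        linear_combination key_rec hα m
      rw [rpoch_succ, Nat.factorial_succ, hsucc]
      push_cast
      field_simp
      linear_combination (α + 1 + (m:ℝ)) * ih

lemma G_closed' (hα : 0 < α) (m : ℕ) :
    Gf α m * (rpoch α m * ((m:ℝ)+α)) = α * Gf α 0 * (Nat.factorial m : ℝ) := by
  have h1 := G_closed hα m
  have h2 : α * rpoch (α+1) m = rpoch α m * ((m:ℝ)+α) := by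
    rw [← rpoch_shift, rpoch_succ]; ring
  linear_combination α * h1 - Gf α m * h2

lemma Gf_pos (hα : 0 < α) (m : ℕ) : 0 < Gf α m := by
  have h0 : 0 < w α m * cc α m m := mul_pos (w_pos hα m) (cc_pos hα m m)
  have hle : w α m * cc α m m ≤ Gf α m :=
    Summable.le_tsum (summable_wcc hα m) m (fun k _ => mul_nonneg (w_nonneg hα k) (cc_nonneg hα m k))
  linarith

/-- the Gauss-evaluation of the connected sum. -/
lemma hasSum_wcc (hα : 0 < α) (m : ℕ) :
    HasSum (fun k => w α k * cc α m k)
      (α * Gf α 0 * (Nat.factorial m : ℝ) / (rpoch α m * ((m:ℝ)+α))) := by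
  have hs := (summable_wcc hα m).hasSum
  have hd : (0:ℝ) < rpoch α m * ((m:ℝ)+α) :=
    mul_pos (rpoch_pos hα m) (by positivity)
  have hv : Gf α m = α * Gf α 0 * (Nat.factorial m : ℝ) / (rpoch α m * ((m:ℝ)+α)) := by
    rw [eq_div_iff hd.ne']
    exact G_closed' hα m
  rw [← hv]
  exact hs


lemma S1 (hα : 0 < α) : Summable (fun m : ℕ => 1/(((m:ℝ)+α))^3) := by
  refine Summable.of_nonneg_of_le (fun m => by positivity) (fun m => ?_)
    (((hasSum_t hα).summable).mul_left ((α+1)/α^2 + 2))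
  have hK2 : (2:ℝ) ≤ (α+1)/α^2 + 2 := by
    have : 0 < (α+1)/α^2 := by positivity
    linarith
  rw [mul_one_div, div_le_div_iff₀ (by positivity) (by positivity)]
  rcases Nat.eq_zero_or_pos m with h|h
  · subst h
    simp only [Nat.cast_zero, zero_add]
    have hKα : ((α+1)/α^2 + 2) * α^3 = α*(α+1) + 2*α^3 := by field_simp
    rw [hKα]
    nlinarith [pow_pos hα 3]
  · have hm1 : (1:ℝ) ≤ (m:ℝ) := by exact_mod_cast h
    have hx : (1:ℝ) ≤ (m:ℝ)+α := by linarith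
    have h2 : ((m:ℝ)+α) * ((m:ℝ)+α+1) ≤ 2*((m:ℝ)+α)^3 := by
      nlinarith [mul_nonneg (mul_nonneg (show (0:ℝ) ≤ (m:ℝ)+α by linarith)
        (show (0:ℝ) ≤ 2*((m:ℝ)+α)+1 by linarith)) (show (0:ℝ) ≤ ((m:ℝ)+α)-1 by linarith)]
    have h3 : 2*((m:ℝ)+α)^3 ≤ ((α+1)/α^2 + 2) * ((m:ℝ)+α)^3 := by
      have hp : (0:ℝ) < ((m:ℝ)+α)^3 := by positivity
      nlinarith
    calc 1 * (((m:ℝ)+α) * ((m:ℝ)+α+1)) = ((m:ℝ)+α) * ((m:ℝ)+α+1) := one_mul _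
      _ ≤ 2*((m:ℝ)+α)^3 := h2
      _ ≤ ((α+1)/α^2 + 2) * ((m:ℝ)+α)^3 := h3

end basic

noncomputable def uu (α : ℝ) (n : ℕ) : ℝ :=
  (Nat.factorial n : ℝ) / (rpoch α n * (((n:ℝ)+α)^2))

noncomputable def Phi (α : ℝ) (p : ℕ × (ℕ × ℕ)) : ℝ :=
  w α p.2.1 * (w α p.1 * cc α p.1 (p.2.1+1+p.2.2) / (((p.2.1+1+p.2.2 : ℕ):ℝ)+α))

section main
variable {α : ℝ}

lemma hGsym (hα : 0 < α) (n : ℕ) : HasSum (fun m => w α m * cc α m n)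
    ((α * Gf α 0) * (Nat.factorial n : ℝ) / (rpoch α n * ((n:ℝ)+α))) := by
  have h := hasSum_wcc hα n
  have hfun : (fun k => w α k * cc α n k) = (fun m => w α m * cc α m n) :=
    funext (fun k => by rw [cc_symm])
  rw [hfun] at h
  exact h

lemma Phi_nonneg (hα : 0 < α) (p : ℕ × (ℕ × ℕ)) : 0 ≤ Phi α p := by
  have h1 := w_nonneg hα p.2.1
  have h2 := w_nonneg hα p.1
  have h3 := cc_nonneg hα p.1 (p.2.1+1+p.2.2)
  have h4 : (0:ℝ) < ((p.2.1+1+p.2.2 : ℕ):ℝ)+α := by positivity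
  rw [Phi]
  positivity

lemma hrow (hα : 0 < α) (m k : ℕ) : HasSum (fun j => Phi α (m,(k,j)))
    (w α k * (w α m * cc α m k / ((m:ℝ)+α))) := by
  have h := (hasSumA hα m k).mul_left (w α k * w α m)
  have hfun : (fun j => w α k * w α m * (cc α m (k+1+j) / (((k+1+j : ℕ):ℝ)+α)))
      = fun j => Phi α (m,(k,j)) := by
    funext j
    rw [Phi]
    ring
  have hval : w α k * w α m * (cc α m k / ((m:ℝ)+α))
      = w α k * (w α m * cc α m k / ((m:ℝ)+α)) := by ring
  rw [hfun, hval] at h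
  exact h

lemma hrow_sum (hα : 0 < α) (m : ℕ) : Summable (fun q : ℕ × ℕ => Phi α (m,q)) := by
  refine (summable_prod_of_nonneg (fun q => Phi_nonneg hα (m,q))).2
    ⟨fun k => (hrow hα m k).summable, ?_⟩
  refine ((summable_wcc hα m).mul_left (w α m/((m:ℝ)+α))).congr (fun k => ?_)
  rw [(hrow hα m k).tsum_eq]
  ring

lemma hA (hα : 0 < α) (m : ℕ) :
    ∑' q : ℕ × ℕ, Phi α (m,q) = (α * Gf α 0) * (1/((m:ℝ)+α)^3) := by
  rw [Summable.tsum_prod' (hrow_sum hα m) (fun k => (hrow hα m k).summable)]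
  have h1 : ∀ k : ℕ, ∑' j, Phi α (m,(k,j))
      = (w α m/((m:ℝ)+α)) * (w α k * cc α m k) := by
    intro k
    rw [(hrow hα m k).tsum_eq]
    ring
  rw [tsum_congr h1, tsum_mul_left, (hasSum_wcc hα m).tsum_eq]
  have hmα : (0:ℝ) < (m:ℝ)+α := by positivity
  have hrp : (0:ℝ) < rpoch α m := rpoch_pos hα m
  have hfm : (0:ℝ) < (Nat.factorial m : ℝ) := by positivity
  rw [w]
  field_simp

lemma hPhiSum (hα : 0 < α) : Summable (Phi α) := by
  refine (summable_prod_of_nonneg (Phi_nonneg hα)).2 ⟨hrow_sum hα, ?_⟩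
  exact ((S1 hα).mul_left (α * Gf α 0)).congr (fun m => (hA hα m).symm)

lemma hcolm (hα : 0 < α) (q : ℕ × ℕ) : HasSum (fun m => Phi α (m,q))
    ((α * Gf α 0) * (w α q.1 * uu α (q.1+1+q.2))) := by
  have h := (hGsym hα (q.1+1+q.2)).mul_left (w α q.1 / (((q.1+1+q.2:ℕ):ℝ)+α))
  have hfun : (fun m => w α q.1 / (((q.1+1+q.2:ℕ):ℝ)+α) * (w α m * cc α m (q.1+1+q.2)))
      = fun m => Phi α (m,q) := by
    funext m
    rw [Phi]
    ring
  have hnα : (0:ℝ) < ((q.1+1+q.2:ℕ):ℝ)+α := by positivity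
  have hrp : (0:ℝ) < rpoch α (q.1+1+q.2) := rpoch_pos hα _
  have hval : w α q.1 / (((q.1+1+q.2:ℕ):ℝ)+α) *
      ((α * Gf α 0) * (Nat.factorial (q.1+1+q.2) : ℝ) /
        (rpoch α (q.1+1+q.2) * (((q.1+1+q.2:ℕ):ℝ)+α)))
      = (α * Gf α 0) * (w α q.1 * uu α (q.1+1+q.2)) := by
    rw [uu]
    field_simp
  rw [hfun, hval] at h
  exact h

end main
end Stmt16

set_option maxHeartbeats 1000000

open Stmt16

/-- ζ(3;α) = ζ(1,2;α); pairs 0 ≤ m₁ < m₂ are parametrized as m₁ = a, m₂ = a+b+1. -/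
theorem stmt_16 (α : ℝ) (hα : 0 < α) :
    (∑' m : ℕ, 1 / ((m : ℝ) + α) ^ 3) =
      ∑' a : ℕ, ∑' b : ℕ,
        (rpoch α a / (Nat.factorial a : ℝ)) *
          ((Nat.factorial (a + b + 1) : ℝ) / rpoch α (a + b + 1)) *
          (1 / (((a : ℝ) + α) * (((a + b + 1 : ℕ) : ℝ) + α) ^ 2)) := by
  classical
  have hG0 : 0 < Gf α 0 := Gf_pos hα 0
  have hκpos : 0 < α * Gf α 0 := mul_pos hα hG0
  have hMQ : ∑' p, Phi α p = (α * Gf α 0) * ∑' m : ℕ, 1/((m:ℝ)+α)^3 := by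
    rw [Summable.tsum_prod' (hPhiSum hα) (hrow_sum hα)]
    rw [tsum_congr (hA hα)]
    exact tsum_mul_left
  have hQM : ∑' p, Phi α p = ∑' (q : ℕ × ℕ), ∑' m, Phi α (m, q) := by
    rw [Summable.tsum_prod' (hPhiSum hα) (hrow_sum hα)]
    have hcomm := Summable.tsum_comm (f := fun (m:ℕ) (q:ℕ×ℕ) => Phi α (m, q)) (hPhiSum hα)
    exact hcomm.symm
  have hcol_summable : Summable (fun q : ℕ × ℕ => ∑' m, Phi α (m, q)) := by
    have h1 : Summable (fun p : (ℕ × ℕ) × ℕ => Phi α p.swap) := (hPhiSum hα).prod_symm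
    exact h1.prod
  have hQsplit : ∑' (q : ℕ × ℕ), ∑' m, Phi α (m, q)
      = ∑' (k : ℕ) (j : ℕ), ∑' m, Phi α (m, (k, j)) :=
    Summable.tsum_prod' hcol_summable (fun k => hcol_summable.prod_factor k)
  have hterm : ∀ k j : ℕ, ∑' m, Phi α (m, (k, j))
      = (α * Gf α 0) * (w α k * uu α (k+1+j)) :=
    fun k j => (hcolm hα (k, j)).tsum_eq
  have hmain : (α * Gf α 0) * ∑' m : ℕ, 1/((m:ℝ)+α)^3
      = ∑' (k : ℕ) (j : ℕ), (α * Gf α 0) * (w α k * uu α (k+1+j)) := by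
    rw [← hMQ, hQM, hQsplit]
    exact tsum_congr (fun k => tsum_congr (fun j => hterm k j))
  have hRHS : ∀ a b : ℕ,
      (rpoch α a / (Nat.factorial a : ℝ)) *
          ((Nat.factorial (a + b + 1) : ℝ) / rpoch α (a + b + 1)) *
          (1 / (((a : ℝ) + α) * (((a + b + 1 : ℕ) : ℝ) + α) ^ 2))
        = w α a * uu α (a+1+b) := by
    intro a b
    have he : a+1+b = a+b+1 := by omega
    rw [he, uu, w]
    have h1 : (0:ℝ) < (Nat.factorial a : ℝ) := by positivity
    have h2 : (0:ℝ) < (a:ℝ)+α := by positivity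
    have h3 : (0:ℝ) < rpoch α (a+b+1) := rpoch_pos hα _
    have h4 : (0:ℝ) < ((a+b+1 : ℕ):ℝ)+α := by positivity
    field_simp
    try ring
    try simp
  calc ∑' m : ℕ, 1 / ((m : ℝ) + α) ^ 3
      = (1/(α * Gf α 0)) * ((α * Gf α 0) * ∑' m : ℕ, 1/((m:ℝ)+α)^3) := by
        field_simp
    _ = (1/(α * Gf α 0)) * ∑' (k : ℕ) (j : ℕ),
          (α * Gf α 0) * (w α k * uu α (k+1+j)) := by rw [hmain]
    _ = (1/(α * Gf α 0)) * ((α * Gf α 0) * ∑' (k : ℕ) (j : ℕ),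
          w α k * uu α (k+1+j)) := by
        congr 1
        rw [← tsum_mul_left]
        exact tsum_congr (fun k => tsum_mul_left)
    _ = ∑' (k : ℕ) (j : ℕ), w α k * uu α (k+1+j) := by
        field_simp
    _ = ∑' a : ℕ, ∑' b : ℕ,
        (rpoch α a / (Nat.factorial a : ℝ)) *
          ((Nat.factorial (a + b + 1) : ℝ) / rpoch α (a + b + 1)) *
          (1 / (((a : ℝ) + α) * (((a + b + 1 : ℕ) : ℝ) + α) ^ 2)) := by
        exact tsum_congr (fun a => tsum_congr (fun b => (hRHS a b).symm))
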